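/- Fix a ∈ ℝ and c ∈ ℂ with c ≠ 0, set b = 0 and E = a, and set Δ = (a² + |c|² + 1 − E²)² − 4|c|². Then: (i) Δ > 0 if and only if |c| ≠ 1; (ii) there exists a nonzero ℓ²-solution of the half-line eigenvalue equation if and only if |c| < 1; (iii) if |c| < 1, then Sol(a, 0, c, a) = ℂ·e₁ when a ≠ 0, and Sol(0, 0, c, 0) is the two-dimensional span of e₁ and e₄ when a = 0. -/

import Mathlib

noncomputable section

open scoped ComplexConjugate

/-- The on-site matrix `V` of the local model. -/
def Vmat (a : ℝ) (b c : ℂ) : Matrix (Fin 4) (Fin 4) ℂ :=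
  !![(a : ℂ), conj c, 0, conj b;
     c, -(a : ℂ), conj b, 0;
     0, b, (a : ℂ), -c;
     b, 0, -(conj c), -(a : ℂ)]

/-- The hopping matrix `A` of the local model. -/
def Amat : Matrix (Fin 4) (Fin 4) ℂ :=
  !![0, -1, 0, 0;
     0, 0, 0, 0;
     0, 0, 0, 0;
     0, 0, 1, 0]

/-- `ψ : ℕ → (Fin 4 → ℂ)` (with `ψ n` standing for the value at the site `n + 1` of the
half-line `{1, 2, 3, …}`) solves the half-line eigenvalue equation `(H♯ − E)ψ = 0`:
`(V − E·I)ψ(1) + A*ψ(2) = 0` and `Aψ(n) + (V − E·I)ψ(n+1) + A*ψ(n+2) = 0` for all `n ≥ 1`. -/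
def IsSolSeq (a : ℝ) (b c : ℂ) (E : ℝ) (ψ : ℕ → Fin 4 → ℂ) : Prop :=
  (Vmat a b c - (E : ℂ) • 1).mulVec (ψ 0) + (Amat.conjTranspose).mulVec (ψ 1) = 0 ∧
    ∀ n : ℕ,
      Amat.mulVec (ψ n) + (Vmat a b c - (E : ℂ) • 1).mulVec (ψ (n + 1)) +
        (Amat.conjTranspose).mulVec (ψ (n + 2)) = 0

/-- The `ℓ²` condition: `∑_{n ≥ 1} ‖ψ(n)‖² < ∞`. -/
def IsL2Seq (ψ : ℕ → Fin 4 → ℂ) : Prop :=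
  Summable fun n => ∑ i, ‖ψ n i‖ ^ 2

/-- The space `Sol(a, b, c, E)` of `ℓ²`-solutions of the half-line eigenvalue equation. -/
def Sol (a : ℝ) (b c : ℂ) (E : ℝ) : Set (ℕ → Fin 4 → ℂ) :=
  {ψ | IsSolSeq a b c E ψ ∧ IsL2Seq ψ}

/-- The sequence `e₁` with `e₁(n) = (c^{n−1}, 0, 0, 0)` (convention `0⁰ = 1`). -/
def eSeq₁ (c : ℂ) : ℕ → Fin 4 → ℂ := fun n => ![c ^ n, 0, 0, 0]

/-- The sequence `e₄` with `e₄(n) = (0, 0, 0, c^{n−1})` (convention `0⁰ = 1`). -/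
def eSeq₄ (c : ℂ) : ℕ → Fin 4 → ℂ := fun n => ![0, 0, 0, c ^ n]

open Filter Topology

lemma Vsub_eq (a : ℝ) (c : ℂ) : Vmat a 0 c - (a:ℂ) • 1 =
    !![0, conj c, 0, 0; c, -(2*(a:ℂ)), 0, 0; 0, 0, 0, -c; 0, 0, -conj c, -(2*(a:ℂ))] := by
  ext i j
  fin_cases i <;> fin_cases j <;>
    simp [Vmat, Matrix.one_apply, Matrix.vecHead, Matrix.vecTail] <;> ring

lemma AmatT_eq : Amat.conjTranspose = !![0,0,0,0; -1,0,0,0; 0,0,0,1; 0,0,0,0] := by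
  ext i j
  fin_cases i <;> fin_cases j <;> simp [Amat, Matrix.vecHead, Matrix.vecTail]

lemma l2_tendsto (ψ : ℕ → Fin 4 → ℂ) (h : IsL2Seq ψ) (i : Fin 4) :
    Tendsto (fun n => ‖ψ n i‖) atTop (𝓝 0) := by
  have hsum := h.tendsto_atTop_zero
  have h1 : Tendsto (fun n => ‖ψ n i‖ ^ 2) atTop (𝓝 0) := by
    apply squeeze_zero (fun n => by positivity)
      (fun n => Finset.single_le_sum (f := fun j => ‖ψ n j‖ ^ 2)
        (fun j _ => by positivity) (Finset.mem_univ i)) hsum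
  have h2 : Tendsto (fun n => Real.sqrt (‖ψ n i‖ ^ 2)) atTop (𝓝 (Real.sqrt 0)) :=
    (Real.continuous_sqrt.tendsto 0).comp h1
  simpa [Real.sqrt_sq (norm_nonneg _)] using h2

lemma solStruct (a : ℝ) (c : ℂ) (hc : c ≠ 0) (ψ : ℕ → Fin 4 → ℂ)
    (h : IsSolSeq a 0 c a ψ) :
    (∀ n, ψ n 1 = 0) ∧ (∀ n, ψ n 0 = c ^ n * ψ 0 0) ∧ (∀ n, ψ n 3 = c ^ n * ψ 0 3) ∧
    (∀ n, ψ n 2 = conj c * ψ (n+1) 2 + 2 * (a:ℂ) * c ^ (n+1) * ψ 0 3) ∧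
    (conj c * ψ 0 2 + 2 * (a:ℂ) * ψ 0 3 = 0) := by
  obtain ⟨hb, hr⟩ := h
  rw [Vsub_eq, AmatT_eq] at hb
  simp only [Vsub_eq, AmatT_eq] at hr
  have hcc : conj c ≠ 0 := by
    intro h; apply hc; rw [← Complex.conj_conj c, h, map_zero]
  have b0 := congrFun hb 0
  have b1 := congrFun hb 1
  have b2 := congrFun hb 2
  have b3 := congrFun hb 3
  simp [Matrix.mulVec, dotProduct, Fin.sum_univ_four] at b0 b1 b2 b3
  have r0 : ∀ n, conj c * ψ (n+1) 1 = ψ n 1 := by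
    intro n
    have := congrFun (hr n) 0
    simp [Amat, Matrix.mulVec, dotProduct, Fin.sum_univ_four] at this
    linear_combination this
  have r1 : ∀ n, c * ψ (n+1) 0 - 2*(a:ℂ) * ψ (n+1) 1 - ψ (n+2) 0 = 0 := by
    intro n
    have := congrFun (hr n) 1
    simp [Amat, Matrix.mulVec, dotProduct, Fin.sum_univ_four] at this
    linear_combination this
  have r2 : ∀ n, ψ (n+2) 3 = c * ψ (n+1) 3 := by
    intro n
    have := congrFun (hr n) 2
    simp [Amat, Matrix.mulVec, dotProduct, Fin.sum_univ_four] at this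
    linear_combination this
  have r3 : ∀ n, ψ n 2 - conj c * ψ (n+1) 2 - 2*(a:ℂ) * ψ (n+1) 3 = 0 := by
    intro n
    have := congrFun (hr n) 3
    simp [Amat, Matrix.mulVec, dotProduct, Fin.sum_univ_four] at this
    linear_combination this
  have h01 : ψ 0 1 = 0 := b0.resolve_left hc
  have h1 : ∀ n, ψ n 1 = 0 := by
    intro n
    induction n with
    | zero => exact h01
    | succ n ih =>
      have := r0 n
      rw [ih] at this
      exact (mul_eq_zero.1 this).resolve_left hcc
  have step0 : ∀ n, ψ (n+1) 0 = c * ψ n 0 := by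
    intro n
    cases n with
    | zero => linear_combination -b1 - 2*(a:ℂ) * h1 0
    | succ m => linear_combination -r1 m - 2*(a:ℂ) * h1 (m+1)
  have h0 : ∀ n, ψ n 0 = c ^ n * ψ 0 0 := by
    intro n
    induction n with
    | zero => simp
    | succ n ih => rw [step0 n, ih]; ring
  have step3 : ∀ n, ψ (n+1) 3 = c * ψ n 3 := by
    intro n
    cases n with
    | zero => linear_combination b2
    | succ m => linear_combination r2 m
  have h3 : ∀ n, ψ n 3 = c ^ n * ψ 0 3 := by
    intro n
    induction n with
    | zero => simp
    | succ n ih => rw [step3 n, ih]; ring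
  refine ⟨h1, h0, h3, ?_, ?_⟩
  · intro n
    linear_combination r3 n + 2*(a:ℂ) * h3 (n+1)
  · linear_combination -b3

lemma decay (a : ℝ) (c : ℂ) (hc : c ≠ 0) (hc1 : ‖c‖ < 1) (ψ : ℕ → Fin 4 → ℂ)
    (hs : IsSolSeq a 0 c a ψ) (hl : IsL2Seq ψ) :
    (∀ n, ψ n 2 = 2*(a:ℂ)*c / ((1 - Complex.normSq c : ℝ) : ℂ) * c ^ n * ψ 0 3) ∧
    (a:ℂ) * ψ 0 3 = 0 := by
  obtain ⟨h1, h0, h3, hrec, hbd⟩ := solStruct a c hc ψ hs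
  have hns : Complex.normSq c < 1 := by
    rw [Complex.normSq_eq_norm_sq]
    have : ‖c‖ = ‖c‖ := rfl
    nlinarith [norm_nonneg c]
  have hd : (0:ℝ) < 1 - Complex.normSq c := by linarith
  have hdC : ((1 - Complex.normSq c : ℝ) : ℂ) ≠ 0 := Complex.ofReal_ne_zero.2 (ne_of_gt hd)
  set α : ℂ := 2*(a:ℂ)*c / ((1 - Complex.normSq c : ℝ) : ℂ) with hα
  set w : ℂ := ψ 0 3 with hw
  have hmc : c * conj c = ((Complex.normSq c : ℝ) : ℂ) := Complex.mul_conj c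
  have hdC' : (1 - ((Complex.normSq c : ℝ) : ℂ)) ≠ 0 := by push_cast at hdC; exact hdC
  have hαd : α * (1 - ((Complex.normSq c : ℝ) : ℂ)) = 2*(a:ℂ)*c := by
    rw [hα]; push_cast; exact div_mul_cancel₀ _ hdC'
  have hα' : α * (1 - c * conj c) = 2*(a:ℂ)*c := by
    rw [hmc]; exact hαd
  set v : ℕ → ℂ := fun n => ψ n 2 - α * c ^ n * w with hv
  have hvrec : ∀ n, v n = conj c * v (n+1) := by
    intro n
    simp only [hv]
    linear_combination hrec n - c ^ n * w * hα'
  have hv0n : ∀ n, v 0 = (conj c) ^ n * v n := by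
    intro n
    induction n with
    | zero => simp
    | succ n ih => rw [ih, hvrec n]; ring
  have hvt : Tendsto (fun n => ‖v n‖) atTop (𝓝 0) := by
    have hg : Tendsto (fun n => ‖ψ n 2‖ + ‖α * w‖ * ‖c‖ ^ n) atTop (𝓝 0) := by
      have hgeo : Tendsto (fun n : ℕ => ‖c‖ ^ n) atTop (𝓝 0) :=
        tendsto_pow_atTop_nhds_zero_of_lt_one (norm_nonneg c) hc1
      have := (l2_tendsto ψ hl 2).add (hgeo.const_mul ‖α * w‖)
      simpa using this
    apply squeeze_zero (fun n => norm_nonneg _) _ hg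
    intro n
    calc ‖v n‖ ≤ ‖ψ n 2‖ + ‖α * c ^ n * w‖ := norm_sub_le _ _
    _ = ‖ψ n 2‖ + ‖α * w‖ * ‖c‖ ^ n := by rw [norm_mul, norm_mul, norm_mul, norm_pow]; ring
  have hv0 : v 0 = 0 := by
    rw [← norm_le_zero_iff]
    apply ge_of_tendsto' hvt
    intro n
    calc ‖v 0‖ = ‖c‖ ^ n * ‖v n‖ := by
          rw [hv0n n, norm_mul, norm_pow, RCLike.norm_conj]
    _ ≤ 1 * ‖v n‖ := by
          apply mul_le_mul_of_nonneg_right _ (norm_nonneg _)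
          exact pow_le_one₀ (norm_nonneg c) hc1.le
    _ = ‖v n‖ := one_mul _
  have hvall : ∀ n, v n = 0 := by
    intro n
    have := hv0n n
    rw [hv0] at this
    have hcn : (conj c) ^ n ≠ 0 := pow_ne_zero n (by
      intro h; apply hc; rw [← Complex.conj_conj c, h, map_zero])
    exact (mul_eq_zero.1 this.symm).resolve_left hcn
  have hψ2 : ∀ n, ψ n 2 = α * c ^ n * w := by
    intro n
    have := hvall n
    simp only [hv] at this
    linear_combination this
  refine ⟨hψ2, ?_⟩
  have h2 : conj c * (α * w) + 2*(a:ℂ)*w = 0 := by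
    have := hψ2 0
    simp only [pow_zero, mul_one] at this
    rw [← this]
    exact hbd
  have key : 2*(a:ℂ) * w = 0 := by
    linear_combination (1 - ((Complex.normSq c:ℝ):ℂ)) * h2 - conj c * w * hαd - 2*(a:ℂ)*w*hmc
  linear_combination key / 2

lemma combo_apply (c z w : ℂ) :
    z • eSeq₁ c + w • eSeq₄ c = fun n => ![z * c ^ n, 0, 0, w * c ^ n] := by
  funext n i
  fin_cases i <;> simp [eSeq₁, eSeq₄]

lemma combo_sol (a : ℝ) (c : ℂ) (z w : ℂ) (hw : (a:ℂ) * w = 0) :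
    IsSolSeq a 0 c a (fun n => ![z * c ^ n, 0, 0, w * c ^ n]) := by
  have haw : a = 0 ∨ w = 0 := by
    rcases mul_eq_zero.1 hw with h | h
    · exact Or.inl (by exact_mod_cast h)
    · exact Or.inr h
  constructor
  · rw [Vsub_eq, AmatT_eq]
    funext i
    fin_cases i <;>
      simp [Matrix.mulVec, dotProduct, Fin.sum_univ_four] <;>
      first | tauto | ring
  · intro n
    rw [Vsub_eq, AmatT_eq]
    funext i
    fin_cases i <;>
      simp [Amat, Matrix.mulVec, dotProduct, Fin.sum_univ_four] <;>
      first | tauto | ring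

lemma combo_l2 (c : ℂ) (hc1 : ‖c‖ < 1) (z w : ℂ) :
    IsL2Seq (fun n => ![z * c ^ n, 0, 0, w * c ^ n]) := by
  unfold IsL2Seq
  have key : ∀ n : ℕ, ∑ i, ‖(![z * c ^ n, 0, 0, w * c ^ n]) i‖ ^ 2
      = (‖z‖ ^ 2 + ‖w‖ ^ 2) * (‖c‖ ^ 2) ^ n := by
    intro n
    simp [Fin.sum_univ_four, norm_mul, norm_pow, mul_pow]
    ring
  have hgeo : Summable fun n : ℕ => (‖z‖ ^ 2 + ‖w‖ ^ 2) * (‖c‖ ^ 2) ^ n :=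
    (summable_geometric_of_lt_one (by positivity) (by nlinarith [norm_nonneg c])).mul_left _
  exact hgeo.congr fun n => (key n).symm

/-- Fix `a ∈ ℝ` and `c ∈ ℂ` with `c ≠ 0`, set `b = 0` and `E = a`, and set
`Δ = (a² + |c|² + 1 − E²)² − 4|c|²`. Then: (i) `Δ > 0` iff `|c| ≠ 1`; (ii) there exists a
nonzero ℓ²-solution iff `|c| < 1`; (iii) if `|c| < 1`, then `Sol(a,0,c,a) = ℂ·e₁` when
`a ≠ 0`, and `Sol(0,0,c,0)` is the two-dimensional span of `e₁` and `e₄` when `a = 0`. -/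
theorem stmt11 (a : ℝ) (c : ℂ) (hc : c ≠ 0) :
    ((a ^ 2 + ‖c‖ ^ 2 + 1 - a ^ 2) ^ 2 - 4 * ‖c‖ ^ 2 > 0 ↔ ‖c‖ ≠ 1) ∧
    ((∃ ψ ∈ Sol a 0 c a, ψ ≠ 0) ↔ ‖c‖ < 1) ∧
    (‖c‖ < 1 →
      (a ≠ 0 → Sol a 0 c a = {ψ | ∃ z : ℂ, ψ = z • eSeq₁ c}) ∧
      (a = 0 →
        Sol a 0 c a = {ψ | ∃ z w : ℂ, ψ = z • eSeq₁ c + w • eSeq₄ c} ∧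
        LinearIndependent ℂ ![eSeq₁ c, eSeq₄ c])) := by
  refine ⟨?_, ?_, ?_⟩
  · constructor
    · intro h h1
      rw [h1] at h
      nlinarith
    · intro h
      have h2 : ‖c‖ ^ 2 - 1 ≠ 0 := by
        intro h3
        have h4 : (‖c‖ - 1) * (‖c‖ + 1) = 0 := by linear_combination h3
        rcases mul_eq_zero.1 h4 with h5 | h5
        · exact h (by linarith)
        · nlinarith [norm_nonneg c]
      have key : (a ^ 2 + ‖c‖ ^ 2 + 1 - a ^ 2) ^ 2 - 4 * ‖c‖ ^ 2 = (‖c‖ ^ 2 - 1) ^ 2 := by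
        ring
      rw [key]
      rcases lt_or_gt_of_ne h2 with h5 | h5 <;> nlinarith
  · constructor
    · rintro ⟨ψ, ⟨hs, hl⟩, hne⟩
      by_contra hge
      push_neg at hge
      obtain ⟨h1, h0, h3, hrec, hbd⟩ := solStruct a c hc ψ hs
      have hzero : ∀ i : Fin 4, (∀ n, ψ n i = c ^ n * ψ 0 i) → ψ 0 i = 0 := by
        intro i hi
        have ht : Tendsto (fun n => ‖ψ n i‖) atTop (𝓝 0) := l2_tendsto ψ hl i
        have hle : ‖ψ 0 i‖ ≤ 0 := by
          apply ge_of_tendsto' ht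
          intro n
          rw [hi n, norm_mul, norm_pow]
          nlinarith [one_le_pow₀ hge (n := n), norm_nonneg (ψ 0 i)]
        exact norm_eq_zero.1 (le_antisymm hle (norm_nonneg _))
      have hz : ψ 0 0 = 0 := hzero 0 h0
      have hw : ψ 0 3 = 0 := hzero 3 h3
      have hcc : conj c ≠ 0 := by
        intro h; apply hc; rw [← Complex.conj_conj c, h, map_zero]
      have h02 : ψ 0 2 = 0 := by
        have hb := hbd
        rw [hw] at hb
        have : conj c * ψ 0 2 = 0 := by linear_combination hb
        exact (mul_eq_zero.1 this).resolve_left hcc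
      have h2z : ∀ n, ψ n 2 = 0 := by
        intro n
        induction n with
        | zero => exact h02
        | succ n ih =>
          have h' := hrec n
          rw [ih, hw] at h'
          have : conj c * ψ (n+1) 2 = 0 := by linear_combination -h'
          exact (mul_eq_zero.1 this).resolve_left hcc
      apply hne
      funext n i
      fin_cases i
      · simp [h0 n, hz]
      · simp [h1 n]
      · simp [h2z n]
      · simp [h3 n, hw]
    · intro hlt
      have he : eSeq₁ c = fun n => ![(1:ℂ) * c ^ n, 0, 0, (0:ℂ) * c ^ n] := by
        funext n i
        fin_cases i <;> simp [eSeq₁]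
      refine ⟨eSeq₁ c, ⟨?_, ?_⟩, ?_⟩
      · rw [he]; exact combo_sol a c 1 0 (mul_zero _)
      · rw [he]; exact combo_l2 c hlt 1 0
      · intro h0'
        have := congrFun (congrFun h0' 0) 0
        simp [eSeq₁] at this
  · intro hlt
    constructor
    · intro ha
      ext ψ
      simp only [Sol, Set.mem_setOf_eq]
      constructor
      · rintro ⟨hs, hl⟩
        obtain ⟨h1, h0, h3, hrec, hbd⟩ := solStruct a c hc ψ hs
        obtain ⟨h2, haw⟩ := decay a c hc hlt ψ hs hl
        have hw : ψ 0 3 = 0 :=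
          (mul_eq_zero.1 haw).resolve_left (Complex.ofReal_ne_zero.2 ha)
        refine ⟨ψ 0 0, ?_⟩
        funext n i
        fin_cases i
        · simp [eSeq₁, h0 n]; ring
        · simp [eSeq₁, h1 n]
        · simp [eSeq₁, h2 n, hw]
        · simp [eSeq₁, h3 n, hw]
      · rintro ⟨z, rfl⟩
        have he : z • eSeq₁ c = fun n => ![z * c ^ n, 0, 0, (0:ℂ) * c ^ n] := by
          funext n i
          fin_cases i <;> simp [eSeq₁]
        rw [he]
        exact ⟨combo_sol a c z 0 (mul_zero _), combo_l2 c hlt z 0⟩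
    · intro ha
      constructor
      · ext ψ
        simp only [Sol, Set.mem_setOf_eq]
        constructor
        · rintro ⟨hs, hl⟩
          obtain ⟨h1, h0, h3, hrec, hbd⟩ := solStruct a c hc ψ hs
          obtain ⟨h2, haw⟩ := decay a c hc hlt ψ hs hl
          refine ⟨ψ 0 0, ψ 0 3, ?_⟩
          rw [combo_apply]
          funext n i
          fin_cases i
          · simp [h0 n]; ring
          · simp [h1 n]
          · simp [h2 n, ha]
          · simp [h3 n]; ring
        · rintro ⟨z, w, rfl⟩
          rw [combo_apply]
          exact ⟨combo_sol a c z w (by rw [ha]; simp), combo_l2 c hlt z w⟩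
      · rw [LinearIndependent.pair_iff]
        intro s t hst
        constructor
        · have := congrFun (congrFun hst 0) 0
          simpa [eSeq₁, eSeq₄] using this
        · have := congrFun (congrFun hst 0) 3
          simpa [eSeq₁, eSeq₄] using this
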